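/- Let Y be a finite label set, f : ℝ^d → Y measurable, σ > 0, and p₀ ∈ (0,1). If x ∈ ℝ^d and y ∈ Y satisfy p₀ < p_{f,σ}(x, y) < 1, then for every δ ∈ ℝ^d with ‖δ‖ < σ·(Φ⁻¹(p_{f,σ}(x, y)) − Φ⁻¹(p₀)), one has p_{f,σ}(x + δ, y) > p₀. -/

import Mathlib

open MeasureTheory ProbabilityTheory

/-- The standard Gaussian CDF `Φ`. -/
noncomputable def stdGaussianCDF (a : ℝ) : ℝ :=
  ((gaussianReal 0 1) (Set.Iic a)).toReal

/-- The inverse `Φ⁻¹` of the standard Gaussian CDF (on `(0,1)`). -/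
noncomputable def stdGaussianCDFInv (p : ℝ) : ℝ :=
  sSup {a : ℝ | stdGaussianCDF a ≤ p}

/-- The Gaussian measure `N(0, σ²I)` on `ℝ^d` (with the Euclidean norm), obtained as the
`d`-fold product of the real Gaussian measure with mean `0` and variance `σ²`. -/
noncomputable def gaussianE (d : ℕ) (σ : ℝ) : Measure (EuclideanSpace ℝ (Fin d)) :=
  (Measure.pi fun _ : Fin d => gaussianReal 0 ⟨σ ^ 2, sq_nonneg σ⟩).map
    (MeasurableEquiv.toLp 2 (Fin d → ℝ))

/-- The smoothed confidence `p_{f,σ}(x, y) = N(0, σ²I)({δ : f(x + δ) = y})`. -/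
noncomputable def smoothedConf {d : ℕ} {Y : Type*} (f : EuclideanSpace ℝ (Fin d) → Y)
    (σ : ℝ) (x : EuclideanSpace ℝ (Fin d)) (y : Y) : ℝ :=
  (gaussianE d σ {δ | f (x + δ) = y}).toReal


open Real Filter Topology
open scoped NNReal ENNReal

lemma stdGaussianCDF_def (a : ℝ) :
    stdGaussianCDF a = ((gaussianReal 0 1) (Set.Iic a)).toReal := rfl

lemma stdGaussianCDF_eq_integral (a : ℝ) :
    stdGaussianCDF a = ∫ x in Set.Iic a, gaussianPDFReal 0 1 x := by
  rw [stdGaussianCDF, gaussianReal_apply_eq_integral 0 one_ne_zero,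
    ENNReal.toReal_ofReal]
  exact setIntegral_nonneg measurableSet_Iic fun x _ => gaussianPDFReal_nonneg 0 1 x

lemma gaussianPDFReal_le_one (x : ℝ) : gaussianPDFReal 0 1 x ≤ 1 := by
  rw [gaussianPDFReal_def]
  simp only
  have h1 : (√(2 * Real.pi * (1:NNReal)))⁻¹ ≤ 1 := by
    rw [inv_le_one_iff₀]
    right
    rw [show ((1:NNReal):ℝ) = 1 by norm_num, mul_one]
    nlinarith [Real.sq_sqrt (by positivity : (0:ℝ) ≤ 2 * Real.pi), Real.sqrt_nonneg (2 * Real.pi),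
      Real.pi_gt_three]
  have h2 : Real.exp (-(x - 0) ^ 2 / (2 * (1:NNReal))) ≤ 1 := by
    rw [Real.exp_le_one_iff]
    have h3 : (0:ℝ) ≤ (x - 0)^2 := sq_nonneg _
    have h4 : (0:ℝ) < 2 * (1:NNReal) := by norm_num
    exact div_nonpos_of_nonpos_of_nonneg (by linarith) (by linarith)
  calc (√(2 * Real.pi * (1:NNReal)))⁻¹ * Real.exp (-(x - 0) ^ 2 / (2 * (1:NNReal)))
      ≤ 1 * 1 := mul_le_mul h1 h2 (Real.exp_nonneg _) zero_le_one
    _ = 1 := by norm_num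

lemma stdGaussianCDF_sub_eq (a b : ℝ) (hab : a ≤ b) :
    stdGaussianCDF b - stdGaussianCDF a = ∫ x in Set.Ioc a b, gaussianPDFReal 0 1 x := by
  have hu : Set.Iic a ∪ Set.Ioc a b = Set.Iic b := Set.Iic_union_Ioc_eq_Iic hab
  have hd : Disjoint (Set.Iic a) (Set.Ioc a b) := by
    simp [Set.disjoint_left]
    intro x hx h; linarith
  rw [stdGaussianCDF_eq_integral, stdGaussianCDF_eq_integral, ← hu,
    setIntegral_union hd measurableSet_Ioc
      ((integrable_gaussianPDFReal 0 1).integrableOn)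
      ((integrable_gaussianPDFReal 0 1).integrableOn)]
  ring

lemma stdGaussianCDF_strictMono : StrictMono stdGaussianCDF := by
  intro a b hab
  have h := stdGaussianCDF_sub_eq a b hab.le
  have hpos : 0 < ∫ x in Set.Ioc a b, gaussianPDFReal 0 1 x := by
    rw [setIntegral_pos_iff_support_of_nonneg_ae]
    · have : Function.support (gaussianPDFReal 0 1) = Set.univ := by
        ext x; simp [Function.mem_support, (gaussianPDFReal_pos 0 1 x one_ne_zero).ne']
      rw [this, Set.univ_inter]
      simp [Real.volume_Ioc, hab]
    · exact Filter.Eventually.of_forall fun x => gaussianPDFReal_nonneg 0 1 x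
    · exact (integrable_gaussianPDFReal 0 1).integrableOn
  linarith

lemma stdGaussianCDF_mono : Monotone stdGaussianCDF := stdGaussianCDF_strictMono.monotone

lemma stdGaussianCDF_lipschitz : LipschitzWith 1 stdGaussianCDF := by
  apply LipschitzWith.of_dist_le_mul
  intro a b
  wlog hab : a ≤ b generalizing a b
  · rw [dist_comm, dist_comm a b]; exact this b a (le_of_not_ge hab)
  rw [Real.dist_eq, Real.dist_eq, abs_of_nonpos (by linarith [stdGaussianCDF_mono hab]),
    abs_of_nonpos (by linarith), neg_sub, neg_sub, NNReal.coe_one, one_mul]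
  rw [stdGaussianCDF_sub_eq a b hab]
  calc ∫ x in Set.Ioc a b, gaussianPDFReal 0 1 x
      ≤ ∫ x in Set.Ioc a b, (1:ℝ) := by
        apply setIntegral_mono_on ((integrable_gaussianPDFReal 0 1).integrableOn)
          (integrableOn_const (by simp [Real.volume_Ioc]))
          measurableSet_Ioc
        intro x _; exact gaussianPDFReal_le_one x
    _ = b - a := by
        simp [Real.volume_Ioc, ENNReal.toReal_ofReal (by linarith : (0:ℝ) ≤ b - a), hab]

lemma continuous_stdGaussianCDF : Continuous stdGaussianCDF :=
  stdGaussianCDF_lipschitz.continuous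

lemma exists_stdGaussianCDF_le {p : ℝ} (hp : 0 < p) : ∃ a, stdGaussianCDF a ≤ p := by
  have hmono : Antitone fun n : ℕ => Set.Iic (-(n:ℝ)) := by
    intro m n hmn
    exact Set.Iic_subset_Iic.2 (by exact_mod_cast neg_le_neg (by exact_mod_cast hmn))
  have hempty : ⋂ n : ℕ, Set.Iic (-(n:ℝ)) = ∅ := by
    ext x
    simp only [Set.mem_iInter, Set.mem_Iic, Set.mem_empty_iff_false, iff_false, not_forall,
      not_le]
    obtain ⟨n, hn⟩ := exists_nat_gt (-x)
    exact ⟨n, by linarith⟩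
  have h := tendsto_measure_iInter_atTop (μ := gaussianReal 0 1)
    (fun n => (measurableSet_Iic).nullMeasurableSet) hmono
    ⟨0, measure_ne_top _ _⟩
  rw [hempty] at h
  simp only [measure_empty] at h
  have h2 : Tendsto (fun n : ℕ => stdGaussianCDF (-(n:ℝ))) atTop (𝓝 0) := by
    simp_rw [stdGaussianCDF_def]
    exact (ENNReal.tendsto_toReal (by simp)).comp h
  have := (h2.eventually_le_const (by linarith : (0:ℝ) < p)).exists
  obtain ⟨n, hn⟩ := this
  exact ⟨-(n:ℝ), hn⟩

lemma exists_lt_stdGaussianCDF {p : ℝ} (hp : p < 1) : ∃ a, p < stdGaussianCDF a := by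
  have hmono : Monotone fun n : ℕ => Set.Iic ((n:ℝ)) := by
    intro m n hmn
    exact Set.Iic_subset_Iic.2 (by exact_mod_cast hmn)
  have huniv : ⋃ n : ℕ, Set.Iic ((n:ℝ)) = Set.univ := by
    ext x
    simp only [Set.mem_iUnion, Set.mem_Iic, Set.mem_univ, iff_true]
    obtain ⟨n, hn⟩ := exists_nat_gt x
    exact ⟨n, hn.le⟩
  have h := tendsto_measure_iUnion_atTop (μ := gaussianReal 0 1) hmono
  rw [huniv] at h
  have h2 : Tendsto (fun n : ℕ => stdGaussianCDF ((n:ℝ))) atTop (𝓝 1) := by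
    simp_rw [stdGaussianCDF_def]
    have : ((gaussianReal 0 1) Set.univ).toReal = 1 := by simp
    rw [← this]
    exact (ENNReal.tendsto_toReal (by simp)).comp h
  have := (h2.eventually_const_lt (by linarith : p < (1:ℝ))).exists
  obtain ⟨n, hn⟩ := this
  exact ⟨(n:ℝ), hn⟩

lemma stdGaussianCDF_inv_spec {p : ℝ} (hp : p ∈ Set.Ioo (0:ℝ) 1) :
    stdGaussianCDF (stdGaussianCDFInv p) = p := by
  set S := {a : ℝ | stdGaussianCDF a ≤ p} with hS
  have hne : S.Nonempty := exists_stdGaussianCDF_le hp.1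
  obtain ⟨M, hM⟩ := exists_lt_stdGaussianCDF hp.2
  have hbdd : BddAbove S := by
    refine ⟨M, fun b hb => ?_⟩
    by_contra hbM
    push_neg at hbM
    exact absurd (le_trans (stdGaussianCDF_strictMono hbM).le hb) (not_le.2 hM)
  have hclosed : IsClosed S := IsClosed.preimage continuous_stdGaussianCDF isClosed_Iic
  have hmem : sSup S ∈ S := hclosed.csSup_mem hne hbdd
  refine le_antisymm hmem ?_
  -- Φ(sSup S) ≥ p
  by_contra hlt
  push_neg at hlt
  -- by continuity, some point slightly above sSup S is in S
  have hcont : ContinuousAt stdGaussianCDF (sSup S) := continuous_stdGaussianCDF.continuousAt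
  have : ∀ᶠ x in 𝓝 (sSup S), stdGaussianCDF x < p :=
    hcont.eventually_lt_const hlt
  obtain ⟨ε, hε, hball⟩ := Metric.eventually_nhds_iff.1 this
  have hx : stdGaussianCDF (sSup S + ε/2) < p := by
    apply hball
    rw [Real.dist_eq]
    rw [abs_of_pos (by linarith)]
    · linarith
  have : sSup S + ε/2 ∈ S := hx.le
  have := le_csSup hbdd this
  linarith

lemma stdGaussianCDFInv_strictMonoOn {p q : ℝ} (hp : p ∈ Set.Ioo (0:ℝ) 1)
    (hq : q ∈ Set.Ioo (0:ℝ) 1) (hpq : p < q) : stdGaussianCDFInv p < stdGaussianCDFInv q := by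
  by_contra h
  push_neg at h
  have := stdGaussianCDF_strictMono.monotone h
  rw [stdGaussianCDF_inv_spec hp, stdGaussianCDF_inv_spec hq] at this
  linarith

-- H2: pushforward of withDensity through a measurable equiv
lemma MeasurableEquiv.withDensity_map {α β : Type*} [MeasurableSpace α] [MeasurableSpace β]
    (e : α ≃ᵐ β) (μ : Measure α) {g : α → ENNReal} (hg : Measurable g) :
    (μ.withDensity g).map e = (μ.map e).withDensity (g ∘ e.symm) := by
  ext s hs
  rw [MeasurableEquiv.map_apply, withDensity_apply _ (e.measurable hs),
    withDensity_apply _ hs, MeasureTheory.setLIntegral_map hs (hg.comp e.symm.measurable)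
      e.measurable]
  congr 1
  ext x
  simp

-- H1: product of withDensity measures
lemma prod_withDensity {α β : Type*} [MeasurableSpace α] [MeasurableSpace β]
    (μ : Measure α) (ν : Measure β) [SigmaFinite μ] [SigmaFinite ν]
    {f : α → ENNReal} {g : β → ENNReal} (hf : Measurable f) (hg : Measurable g)
    [SigmaFinite (μ.withDensity f)] [SigmaFinite (ν.withDensity g)] :
    (μ.withDensity f).prod (ν.withDensity g)
      = (μ.prod ν).withDensity (fun p => f p.1 * g p.2) := by
  refine Measure.prod_eq fun s t hs ht => ?_
  rw [withDensity_apply _ (hs.prod ht), ← Measure.prod_restrict,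
    lintegral_prod (fun p => f p.1 * g p.2) ((hf.comp measurable_fst).mul (hg.comp measurable_snd)).aemeasurable]
  simp only
  calc ∫⁻ x, ∫⁻ y, f x * g y ∂ν.restrict t ∂μ.restrict s
      = ∫⁻ x, f x * ∫⁻ y, g y ∂ν.restrict t ∂μ.restrict s := by
        congr 1; ext x; rw [lintegral_const_mul _ hg]
    _ = (∫⁻ x, f x ∂μ.restrict s) * ∫⁻ y, g y ∂ν.restrict t := by
        rw [lintegral_mul_const _ hf]
    _ = (μ.withDensity f) s * (ν.withDensity g) t := by
        rw [withDensity_apply _ hs, withDensity_apply _ ht]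

lemma gaussian_shift_density (v : ℝ≥0) (hv : v ≠ 0) (c : ℝ) :
    (gaussianReal 0 v).map (fun z => z + c) = (gaussianReal 0 v).withDensity
      (fun z => ENNReal.ofReal (Real.exp (z * c / v - c ^ 2 / (2 * v)))) := by
  rw [gaussianReal_map_add_const c, zero_add, gaussianReal_of_var_ne_zero c hv,
    gaussianReal_of_var_ne_zero 0 hv, ← withDensity_mul _ (measurable_gaussianPDF 0 v)
      (by fun_prop)]
  congr 1
  ext z
  simp only [Pi.mul_apply, gaussianPDF]
  rw [← ENNReal.ofReal_mul (gaussianPDFReal_nonneg 0 v z)]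
  congr 1
  rw [gaussianPDFReal_def, gaussianPDFReal_def]
  simp only
  have hv' : (v:ℝ) ≠ 0 := by exact_mod_cast hv
  have hv0 : (0:ℝ) < v := lt_of_le_of_ne v.coe_nonneg (Ne.symm hv')
  conv_rhs => rw [mul_assoc, ← Real.exp_add]
  congr 1
  field_simp
  ring

lemma gaussianReal_Iic_toReal (V : ℝ≥0) (hV : V ≠ 0) (t : ℝ) :
    ((gaussianReal 0 V) (Set.Iic t)).toReal
      = ((gaussianReal 0 1) (Set.Iic (t / Real.sqrt V))).toReal := by
  have hV' : (0:ℝ) < V := lt_of_le_of_ne V.coe_nonneg (by exact_mod_cast hV.symm)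
  have hs : (0:ℝ) < Real.sqrt V := Real.sqrt_pos.2 hV'
  have hmap : gaussianReal 0 V = (gaussianReal 0 1).map (fun x => Real.sqrt V * x) := by
    rw [gaussianReal_map_const_mul]
    congr 1
    · ring
    · refine NNReal.coe_injective ?_
      push_cast
      rw [Real.sq_sqrt hV'.le, mul_one]
  rw [hmap, Measure.map_apply (measurable_const_mul _) measurableSet_Iic]
  have hset : (fun x => Real.sqrt V * x) ⁻¹' (Set.Iic t) = Set.Iic (t / Real.sqrt V) := by
    ext x
    simp only [Set.mem_preimage, Set.mem_Iic]
    rw [← le_div_iff₀' hs]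
  rw [hset]

lemma gaussianPDFReal_conv_identity (a b : ℝ≥0) (ha : a ≠ 0) (hb : b ≠ 0) (x y : ℝ) :
    gaussianPDFReal 0 a x * gaussianPDFReal x b y
      = gaussianPDFReal 0 (a + b) y * gaussianPDFReal ((a:ℝ) * y / (a + b)) (a * b / (a + b)) x := by
  have ha' : (0:ℝ) < a := lt_of_le_of_ne a.coe_nonneg (by exact_mod_cast ha.symm)
  have hb' : (0:ℝ) < b := lt_of_le_of_ne b.coe_nonneg (by exact_mod_cast hb.symm)
  have hab : (0:ℝ) < (a:ℝ) + b := by linarith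
  simp only [gaussianPDFReal_def]
  have hcast : ((a * b / (a + b) : ℝ≥0) : ℝ) = (a:ℝ) * b / ((a:ℝ) + b) := by push_cast; ring
  have hcast2 : (((a + b) : ℝ≥0) : ℝ) = (a:ℝ) + b := by push_cast; ring
  rw [hcast, hcast2]
  have hconst : (√(2 * Real.pi * a))⁻¹ * (√(2 * Real.pi * b))⁻¹
      = (√(2 * Real.pi * ((a:ℝ) + b)))⁻¹ * (√(2 * Real.pi * ((a:ℝ) * b / ((a:ℝ) + b))))⁻¹ := by
    rw [← mul_inv, ← mul_inv, ← Real.sqrt_mul (by positivity), ← Real.sqrt_mul (by positivity)]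
    congr 1
    field_simp
  have hexp : Real.exp (-(x - 0) ^ 2 / (2 * a)) * Real.exp (-(y - x) ^ 2 / (2 * b))
      = Real.exp (-(y - 0) ^ 2 / (2 * ((a:ℝ) + b)))
        * Real.exp (-(x - (a:ℝ) * y / ((a:ℝ) + b)) ^ 2 / (2 * ((a:ℝ) * b / ((a:ℝ) + b)))) := by
    rw [← Real.exp_add, ← Real.exp_add]
    congr 1
    field_simp
    ring
  calc (√(2 * π * a))⁻¹ * rexp (-(x - 0) ^ 2 / (2 * a))
        * ((√(2 * π * b))⁻¹ * rexp (-(y - x) ^ 2 / (2 * b)))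
      = ((√(2 * Real.pi * a))⁻¹ * (√(2 * Real.pi * b))⁻¹)
        * (Real.exp (-(x - 0) ^ 2 / (2 * a)) * Real.exp (-(y - x) ^ 2 / (2 * b))) := by ring
    _ = ((√(2 * Real.pi * ((a:ℝ) + b)))⁻¹ * (√(2 * Real.pi * ((a:ℝ) * b / ((a:ℝ) + b))))⁻¹)
        * (Real.exp (-(y - 0) ^ 2 / (2 * ((a:ℝ) + b)))
          * Real.exp (-(x - (a:ℝ) * y / ((a:ℝ) + b)) ^ 2
              / (2 * ((a:ℝ) * b / ((a:ℝ) + b))))) := by rw [hconst, hexp]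
    _ = _ := by ring

lemma gaussian_conv (a b : ℝ≥0) :
    ((gaussianReal 0 a).prod (gaussianReal 0 b)).map (fun p : ℝ × ℝ => p.1 + p.2)
      = gaussianReal 0 (a + b) := by
  rcases eq_or_ne a 0 with rfl | ha
  · rw [gaussianReal_zero_var, Measure.dirac_prod,
      Measure.map_map (by fun_prop) (by fun_prop)]
    have : ((fun p : ℝ × ℝ => p.1 + p.2) ∘ Prod.mk (0:ℝ)) = id := by
      ext y; simp
    rw [this, Measure.map_id, zero_add]
  rcases eq_or_ne b 0 with rfl | hb
  · rw [gaussianReal_zero_var, Measure.prod_dirac,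
      Measure.map_map (by fun_prop) (by fun_prop)]
    have : ((fun p : ℝ × ℝ => p.1 + p.2) ∘ (fun x : ℝ => (x, (0:ℝ)))) = id := by
      ext y; simp
    rw [this, Measure.map_id, add_zero]
  have hab : a + b ≠ 0 := by
    intro h
    exact ha (add_eq_zero.1 h).1
  have hcont : Continuous fun p : ℝ × ℝ => gaussianPDFReal p.1 b p.2 := by
    simp only [gaussianPDFReal_def]
    fun_prop
  have hk : Measurable fun p : ℝ × ℝ => gaussianPDF p.1 b p.2 :=
    ENNReal.measurable_ofReal.comp hcont.measurable
  ext s hs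
  have hadd : Measurable fun p : ℝ × ℝ => p.1 + p.2 := measurable_fst.add measurable_snd
  rw [Measure.map_apply hadd hs, Measure.prod_apply (hadd hs)]
  have hslice : ∀ x : ℝ, (gaussianReal 0 b) (Prod.mk x ⁻¹' ((fun p : ℝ × ℝ => p.1 + p.2) ⁻¹' s))
      = ∫⁻ y in s, gaussianPDF x b y := by
    intro x
    have h1 : Prod.mk x ⁻¹' ((fun p : ℝ × ℝ => p.1 + p.2) ⁻¹' s) = (fun y => x + y) ⁻¹' s := rfl
    rw [h1, ← Measure.map_apply (measurable_const_add x) hs, gaussianReal_map_const_add,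
      zero_add, gaussianReal_apply x hb]
  simp_rw [hslice]
  rw [gaussianReal_of_var_ne_zero 0 ha,
    lintegral_withDensity_eq_lintegral_mul _ (measurable_gaussianPDF 0 a)
      (Measurable.lintegral_prod_right (f := fun x y => gaussianPDF x b y) hk)]
  simp only [Pi.mul_apply]
  have hswap : ∫⁻ x, gaussianPDF 0 a x * ∫⁻ y in s, gaussianPDF x b y ∂volume
      = ∫⁻ y in s, ∫⁻ x, gaussianPDF 0 a x * gaussianPDF x b y ∂volume := by
    have : ∀ x : ℝ, gaussianPDF 0 a x * ∫⁻ y in s, gaussianPDF x b y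
        = ∫⁻ y in s, gaussianPDF 0 a x * gaussianPDF x b y := fun x =>
      (lintegral_const_mul _ (hk.comp (measurable_prodMk_left))).symm
    simp_rw [this]
    exact lintegral_lintegral_swap
      (((measurable_gaussianPDF 0 a).comp measurable_fst).mul hk).aemeasurable
  rw [hswap]
  have hinner : ∀ y : ℝ, ∫⁻ x, gaussianPDF 0 a x * gaussianPDF x b y ∂volume
      = gaussianPDF 0 (a + b) y := by
    intro y
    have hid : ∀ x : ℝ, gaussianPDF 0 a x * gaussianPDF x b y
        = gaussianPDF 0 (a + b) y * gaussianPDF ((a:ℝ) * y / (a + b)) (a * b / (a + b)) x := by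
      intro x
      simp only [gaussianPDF]
      rw [← ENNReal.ofReal_mul (gaussianPDFReal_nonneg 0 a x),
        ← ENNReal.ofReal_mul (gaussianPDFReal_nonneg 0 (a+b) y),
        gaussianPDFReal_conv_identity a b ha hb x y]
    simp_rw [hid]
    have hvne : a * b / (a + b) ≠ 0 := by
      apply div_ne_zero (mul_ne_zero ha hb) hab
    rw [lintegral_const_mul _ (measurable_gaussianPDF _ _),
      lintegral_gaussianPDF_eq_one _ hvne, mul_one]
  rw [setLIntegral_congr_fun hs (fun y _ => hinner y),
    ← gaussianReal_apply 0 hab]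

-- the pi gaussian on `Fin d → ℝ`
noncomputable def piGauss (d : ℕ) (v : ℝ≥0) : Measure (Fin d → ℝ) :=
  Measure.pi fun _ : Fin d => gaussianReal 0 v

instance (d : ℕ) (v : ℝ≥0) : IsProbabilityMeasure (piGauss d v) := by
  unfold piGauss; infer_instance

lemma piGauss_map_equiv (d : ℕ) (v : ℝ≥0) :
    (piGauss (d+1) v).map (MeasurableEquiv.piFinSuccAbove (fun _ : Fin (d+1) => ℝ) 0)
      = (gaussianReal 0 v).prod (piGauss d v) :=
  (measurePreserving_piFinSuccAbove (fun _ : Fin (d+1) => gaussianReal 0 v) 0).map_eq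

lemma piGauss_map_sum (d : ℕ) (v : ℝ≥0) (w : Fin d → ℝ) :
    (piGauss d v).map (fun z => ∑ i, w i * z i)
      = gaussianReal 0 ((∑ i, ‖w i‖₊ ^ 2) * v) := by
  induction d with
  | zero =>
      have h0 : (fun z : Fin 0 → ℝ => ∑ i, w i * z i) = fun _ => (0:ℝ) := by
        funext z; simp
      rw [h0, Measure.map_const,
        show ((∑ i : Fin 0, ‖w i‖₊ ^ 2) * v) = 0 by simp, gaussianReal_zero_var]
      simp
  | succ d ih =>
      set e := MeasurableEquiv.piFinSuccAbove (fun _ : Fin (d+1) => ℝ) 0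
      have hcomp : (fun z : Fin (d+1) → ℝ => ∑ i, w i * z i)
          = (fun p : ℝ × (Fin d → ℝ) => w 0 * p.1 + ∑ i, w i.succ * p.2 i) ∘ e := by
        funext z
        simp only [Function.comp_apply, e, MeasurableEquiv.piFinSuccAbove_apply]
        rw [Fin.sum_univ_succ]
        congr 1
      rw [hcomp, ← Measure.map_map (by fun_prop) e.measurable, piGauss_map_equiv]
      have hcomp2 : (fun p : ℝ × (Fin d → ℝ) => w 0 * p.1 + ∑ i, w i.succ * p.2 i)
          = (fun q : ℝ × ℝ => q.1 + q.2)
            ∘ (Prod.map (fun a => w 0 * a) (fun y : Fin d → ℝ => ∑ i, w i.succ * y i)) := by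
        funext p; simp
      rw [hcomp2, ← Measure.map_map (g := fun q : ℝ × ℝ => q.1 + q.2) (measurable_fst.add measurable_snd) (by fun_prop),
        ← Measure.map_prod_map _ _ (by fun_prop) (by fun_prop),
        gaussianReal_map_const_mul (w 0), ih, mul_zero, gaussian_conv]
      congr 1
      rw [Fin.sum_univ_succ, add_mul]
      congr 1
      · congr 1
        refine NNReal.coe_injective ?_
        push_cast
        rw [Real.norm_eq_abs, sq_abs]

lemma piGauss_map_add (d : ℕ) (v : ℝ≥0) (hv : v ≠ 0) (δ : Fin d → ℝ) :
    (piGauss d v).map (fun z => z + δ) = (piGauss d v).withDensity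
      (fun z => ENNReal.ofReal
        (Real.exp ((∑ i, δ i * z i) / v - (∑ i, δ i ^ 2) / (2 * v)))) := by
  induction d with
  | zero =>
      have h0 : (fun z : Fin 0 → ℝ => z + δ) = id := by
        funext z; exact Subsingleton.elim _ _
      rw [h0, Measure.map_id]
      have : (fun z : Fin 0 → ℝ => ENNReal.ofReal
          (Real.exp ((∑ i, δ i * z i) / v - (∑ i, δ i ^ 2) / (2 * v)))) = 1 := by
        funext z; simp
      rw [this, withDensity_one]
  | succ d ih =>
      set e := MeasurableEquiv.piFinSuccAbove (fun _ : Fin (d+1) => ℝ) 0 with he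
      set δ' : Fin d → ℝ := fun i => δ i.succ with hδ'
      have hmes1 : Measurable fun a : ℝ =>
          ENNReal.ofReal (Real.exp (a * δ 0 / v - (δ 0) ^ 2 / (2 * v))) := by fun_prop
      have hmes2 : Measurable fun y : Fin d → ℝ => ENNReal.ofReal
          (Real.exp ((∑ i, δ' i * y i) / v - (∑ i, δ' i ^ 2) / (2 * v))) := by
        apply ENNReal.measurable_ofReal.comp
        apply Real.measurable_exp.comp
        fun_prop
      have hcomp : (fun z : Fin (d+1) → ℝ => z + δ)
          = e.symm ∘ (Prod.map (fun a : ℝ => a + δ 0) (fun y => y + δ')) ∘ e := by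
        funext z
        apply e.injective
        simp only [Function.comp_apply, MeasurableEquiv.apply_symm_apply]
        ext1
        · simp [e, MeasurableEquiv.piFinSuccAbove_apply]
        · simp [e, MeasurableEquiv.piFinSuccAbove_apply]
          rfl
      haveI h1p : IsProbabilityMeasure ((gaussianReal 0 v).withDensity
          (fun a => ENNReal.ofReal (Real.exp (a * δ 0 / v - (δ 0) ^ 2 / (2 * v))))) := by
        rw [← gaussian_shift_density v hv (δ 0)]
        exact Measure.isProbabilityMeasure_map (by fun_prop)
      haveI h2p : IsProbabilityMeasure ((piGauss d v).withDensity
          (fun y => ENNReal.ofReal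
            (Real.exp ((∑ i, δ' i * y i) / v - (∑ i, δ' i ^ 2) / (2 * v))))) := by
        rw [← ih δ']
        exact Measure.isProbabilityMeasure_map (by fun_prop)
      rw [hcomp, ← Function.comp_assoc,
        ← Measure.map_map (e.symm.measurable.comp (by fun_prop)) e.measurable,
        piGauss_map_equiv, ← Measure.map_map e.symm.measurable (by fun_prop),
        ← Measure.map_prod_map _ _ (by fun_prop) (by fun_prop),
        gaussian_shift_density v hv (δ 0), ih δ',
        prod_withDensity _ _ hmes1 hmes2,
        MeasurableEquiv.withDensity_map e.symm _ (by
          exact (hmes1.comp measurable_fst).mul (hmes2.comp measurable_snd))]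
      have hπ : ((gaussianReal 0 v).prod (piGauss d v)).map e.symm = piGauss (d+1) v := by
        rw [← piGauss_map_equiv d v, Measure.map_map e.symm.measurable e.measurable]
        simp
      rw [hπ]
      congr 1
      funext z
      simp only [Function.comp_apply, MeasurableEquiv.symm_symm]
      rw [← ENNReal.ofReal_mul (Real.exp_nonneg _), ← Real.exp_add]
      have h1 : (e z).1 = z 0 := rfl
      have h2 : (e z).2 = fun j : Fin d => z j.succ := by
        funext j
        simp only [e, MeasurableEquiv.piFinSuccAbove_apply]
        rfl
      congr 2
      rw [h1, h2]
      rw [Fin.sum_univ_succ (f := fun i => δ i * z i), Fin.sum_univ_succ (f := fun i => δ i ^ 2)]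
      simp only [hδ']
      ring

lemma np_lintegral_le {Ω : Type*} [MeasurableSpace Ω] (γ : Measure Ω) [IsFiniteMeasure γ]
    {L : Ω → ℝ≥0∞} {A H : Set Ω} (hA : MeasurableSet A)
    (hH : MeasurableSet H) (c : ℝ≥0∞)
    (hHle : ∀ ω ∈ H, L ω ≤ c) (hHge : ∀ ω ∉ H, c ≤ L ω) (hγ : γ A = γ H) :
    ∫⁻ ω in H, L ω ∂γ ≤ ∫⁻ ω in A, L ω ∂γ := by
  have key : γ (H \ A) = γ (A \ H) := by
    have h1 : γ (H ∩ A) + γ (H \ A) = γ H := measure_inter_add_diff H hA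
    have h2 : γ (A ∩ H) + γ (A \ H) = γ A := measure_inter_add_diff A hH
    rw [Set.inter_comm A H] at h2
    have := h1.trans (hγ.symm.trans h2.symm)
    exact (ENNReal.add_right_inj (measure_ne_top γ _)).1 this
  have b1 : ∫⁻ ω in H \ A, L ω ∂γ ≤ c * γ (H \ A) := by
    rw [← setLIntegral_const]
    exact setLIntegral_mono' (hH.diff hA) fun ω hω => hHle ω hω.1
  have b2 : c * γ (A \ H) ≤ ∫⁻ ω in A \ H, L ω ∂γ := by
    rw [← setLIntegral_const]
    exact setLIntegral_mono' (hA.diff hH) fun ω hω => hHge ω hω.2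
  calc ∫⁻ ω in H, L ω ∂γ
      = ∫⁻ ω in H ∩ A, L ω ∂γ + ∫⁻ ω in H \ A, L ω ∂γ :=
        (lintegral_inter_add_diff L H hA).symm
    _ ≤ ∫⁻ ω in H ∩ A, L ω ∂γ + c * γ (H \ A) := add_le_add le_rfl b1
    _ = ∫⁻ ω in A ∩ H, L ω ∂γ + c * γ (A \ H) := by rw [Set.inter_comm, key]
    _ ≤ ∫⁻ ω in A ∩ H, L ω ∂γ + ∫⁻ ω in A \ H, L ω ∂γ := add_le_add le_rfl b2
    _ = ∫⁻ ω in A, L ω ∂γ := lintegral_inter_add_diff L A hH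

lemma key_bound (d : ℕ) (v : ℝ≥0) (hv : v ≠ 0) {A : Set (Fin d → ℝ)} (hA : MeasurableSet A)
    (δ : Fin d → ℝ) (hr : 0 < ∑ i, δ i ^ 2)
    (hp0 : 0 < (piGauss d v A).toReal) (hp1 : (piGauss d v A).toReal < 1) :
    stdGaussianCDF (stdGaussianCDFInv ((piGauss d v A).toReal)
        - Real.sqrt (∑ i, δ i ^ 2) / Real.sqrt v)
      ≤ ((piGauss d v) {z | z + δ ∈ A}).toReal := by
  set γ := piGauss d v with hγdef
  set p := (γ A).toReal with hpdef
  have hv' : (0:ℝ) < v := lt_of_le_of_ne v.coe_nonneg (by exact_mod_cast hv.symm)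
  set r2 := ∑ i, δ i ^ 2 with hr2
  set V : ℝ≥0 := (∑ i, ‖δ i‖₊ ^ 2) * v with hVdef
  have hVcoe : (V:ℝ) = r2 * v := by
    push_cast [hVdef]
    rw [hr2]
    congr 1
    refine Finset.sum_congr rfl fun i _ => ?_
    rw [Real.norm_eq_abs, sq_abs]
  have hV : V ≠ 0 := by
    intro h
    rw [h] at hVcoe
    simp only [NNReal.coe_zero] at hVcoe
    nlinarith
  have hsV : (0:ℝ) < Real.sqrt V := Real.sqrt_pos.2 (by rw [hVcoe]; positivity)
  set T : (Fin d → ℝ) → ℝ := fun z => ∑ i, δ i * z i with hTdef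
  have hTmeas : Measurable T := by fun_prop
  have hTlaw : γ.map T = gaussianReal 0 V := piGauss_map_sum d v δ
  set t0 := Real.sqrt V * stdGaussianCDFInv p with ht0
  set H := T ⁻¹' (Set.Iic t0) with hHdef
  have hHmeas : MeasurableSet H := hTmeas measurableSet_Iic
  -- γ H = γ A
  have hγH : (γ H).toReal = p := by
    have : γ H = (γ.map T) (Set.Iic t0) := by
      rw [Measure.map_apply hTmeas measurableSet_Iic]
    rw [this, hTlaw, gaussianReal_Iic_toReal V hV t0, ht0, mul_comm,
      mul_div_assoc, div_self hsV.ne', mul_one]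
    exact stdGaussianCDF_inv_spec ⟨hp0, hp1⟩
  have hγAH : γ A = γ H := by
    have h1 : γ A ≠ ⊤ := measure_ne_top _ _
    have h2 : γ H ≠ ⊤ := measure_ne_top _ _
    rw [← ENNReal.toReal_eq_toReal_iff' h1 h2, hγH, hpdef]
  -- the likelihood ratio
  set L : (Fin d → ℝ) → ℝ≥0∞ :=
    fun z => ENNReal.ofReal (Real.exp (T z / v - r2 / (2 * v))) with hLdef
  have hdens : γ.map (fun z => z + δ) = γ.withDensity L := piGauss_map_add d v hv δ
  haveI : IsProbabilityMeasure (γ.map (fun z => z + δ)) :=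
    Measure.isProbabilityMeasure_map (measurable_add_const δ).aemeasurable
  set c : ℝ≥0∞ := ENNReal.ofReal (Real.exp (t0 / v - r2 / (2 * v))) with hcdef
  have hNP : (γ.map (fun z => z + δ)) H ≤ (γ.map (fun z => z + δ)) A := by
    rw [hdens, withDensity_apply _ hA, withDensity_apply _ hHmeas]
    refine np_lintegral_le γ hA hHmeas c ?_ ?_ hγAH
    · intro ω hω
      apply ENNReal.ofReal_le_ofReal
      apply Real.exp_le_exp.2
      have hTz : T ω ≤ t0 := hω
      have hdiv : T ω / v ≤ t0 / v := by gcongr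
      linarith
    · intro ω hω
      apply ENNReal.ofReal_le_ofReal
      apply Real.exp_le_exp.2
      have hTz : t0 ≤ T ω := le_of_not_ge fun h => hω h
      have hdiv : t0 / v ≤ T ω / v := by gcongr
      linarith
  -- compute γ' H
  have hTshift : ∀ z, T (z + δ) = T z + r2 := by
    intro z
    simp only [hTdef, Pi.add_apply, mul_add, hr2, sq]
    rw [← Finset.sum_add_distrib]
  have hshift : ((fun z => z + δ) ⁻¹' H) = T ⁻¹' Set.Iic (t0 - r2) := by
    ext z
    simp only [Set.mem_preimage, hHdef, Set.mem_Iic, hTshift z]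
    constructor <;> intro h <;> linarith
  have hγ'H : ((γ.map (fun z => z + δ)) H).toReal
      = stdGaussianCDF (stdGaussianCDFInv p - Real.sqrt r2 / Real.sqrt v) := by
    rw [Measure.map_apply (measurable_add_const δ) hHmeas, hshift,
      ← Measure.map_apply hTmeas measurableSet_Iic, hTlaw,
      gaussianReal_Iic_toReal V hV]
    congr 1
    rw [ht0, sub_div, mul_comm, mul_div_assoc, div_self hsV.ne', mul_one]
    congr 1
    have hsr2 : (0:ℝ) < Real.sqrt r2 := Real.sqrt_pos.2 hr
    have hsv : (0:ℝ) < Real.sqrt v := Real.sqrt_pos.2 hv'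
    have h2 : Real.sqrt r2 * Real.sqrt r2 = r2 := Real.mul_self_sqrt hr.le
    have h3 : r2 / (Real.sqrt r2 * Real.sqrt v) = Real.sqrt r2 / Real.sqrt v := by
      rw [div_eq_div_iff (by positivity) hsv.ne']
      nlinarith [h2]
    rw [hVcoe, Real.sqrt_mul hr.le, h3]
  -- conclude
  have hfin : ((γ.map (fun z => z + δ)) H).toReal ≤ ((γ.map (fun z => z + δ)) A).toReal :=
    ENNReal.toReal_mono (measure_ne_top _ _) hNP
  rw [hγ'H] at hfin
  rwa [Measure.map_apply (measurable_add_const δ) hA] at hfin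

/-- certified radius for exceeding the threshold `p₀`. -/
theorem stmt_1 {d : ℕ} {Y : Type*} [Fintype Y] [MeasurableSpace Y] [MeasurableSingletonClass Y]
    (f : EuclideanSpace ℝ (Fin d) → Y) (hf : Measurable f)
    (σ : ℝ) (hσ : 0 < σ) (p₀ : ℝ) (hp₀ : p₀ ∈ Set.Ioo (0 : ℝ) 1)
    (x : EuclideanSpace ℝ (Fin d)) (y : Y)
    (h₁ : p₀ < smoothedConf f σ x y) (h₂ : smoothedConf f σ x y < 1)
    (δ : EuclideanSpace ℝ (Fin d))
    (hδ : ‖δ‖ < σ * (stdGaussianCDFInv (smoothedConf f σ x y) - stdGaussianCDFInv p₀)) :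
    p₀ < smoothedConf f σ (x + δ) y := by
  classical
  set e := (MeasurableEquiv.toLp 2 (Fin d → ℝ)).symm with hedef
  set v : ℝ≥0 := ⟨σ ^ 2, sq_nonneg σ⟩ with hvdef
  have hv : v ≠ 0 := by
    intro h
    have : σ ^ 2 = 0 := congrArg NNReal.toReal h
    exact hσ.ne' (by nlinarith)
  have htrans : ∀ S : Set (EuclideanSpace ℝ (Fin d)),
      gaussianE d σ S = piGauss d v (⇑e.symm ⁻¹' S) := by
    intro S
    rw [gaussianE, MeasurableEquiv.map_apply]
    rfl
  by_cases hδ0 : δ = 0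
  · subst hδ0
    simpa using h₁
  set A : Set (Fin d → ℝ) := {z | f (x + e.symm z) = y} with hAdef
  have hAmeas : MeasurableSet A := by
    have : Measurable fun z : Fin d → ℝ => f (x + e.symm z) :=
      hf.comp (measurable_const.add e.symm.measurable)
    exact this (measurableSet_singleton y)
  have hpA : smoothedConf f σ x y = (piGauss d v A).toReal := by
    rw [smoothedConf, htrans]
    rfl
  have hadd : ∀ z : Fin d → ℝ, e.symm (z + e δ) = e.symm z + δ := fun z => rfl
  have hx : smoothedConf f σ (x + δ) y = (piGauss d v {z | z + e δ ∈ A}).toReal := by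
    rw [smoothedConf, htrans]
    congr 2
    ext z
    simp only [Set.mem_preimage, Set.mem_setOf_eq, hAdef]
    have harg : x + e.symm (z + e δ) = x + δ + e.symm z := by
      rw [hadd z]
      rw [add_comm (e.symm z) δ, ← add_assoc]
    rw [← harg]
  have hnorm : ‖δ‖ = Real.sqrt (∑ i, (e δ) i ^ 2) := by
    rw [EuclideanSpace.norm_eq]
    congr 1
    refine Finset.sum_congr rfl fun i _ => ?_
    rw [Real.norm_eq_abs, sq_abs]
    rfl
  have hδpos : 0 < ∑ i, (e δ) i ^ 2 := by
    have h0 : 0 < ‖δ‖ := norm_pos_iff.2 hδ0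
    rw [hnorm] at h0
    by_contra h
    push_neg at h
    rw [Real.sqrt_eq_zero'.2 h] at h0
    exact lt_irrefl 0 h0
  have hsv : Real.sqrt v = σ := by
    rw [hvdef]
    exact Real.sqrt_sq hσ.le
  set p := smoothedConf f σ x y with hpdef
  have hkb := key_bound d v hv hAmeas (e δ) hδpos
    (by rw [← hpA]; linarith [hp₀.1]) (by rw [← hpA]; exact h₂)
  rw [← hpA, ← hx] at hkb
  have hlt : stdGaussianCDFInv p₀ < stdGaussianCDFInv p - ‖δ‖ / σ := by
    have h1 : ‖δ‖ / σ < stdGaussianCDFInv p - stdGaussianCDFInv p₀ := by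
      rw [div_lt_iff₀ hσ, mul_comm]
      exact hδ
    linarith
  calc p₀ = stdGaussianCDF (stdGaussianCDFInv p₀) := (stdGaussianCDF_inv_spec hp₀).symm
    _ < stdGaussianCDF (stdGaussianCDFInv p - ‖δ‖ / σ) := stdGaussianCDF_strictMono hlt
    _ = stdGaussianCDF (stdGaussianCDFInv p - Real.sqrt (∑ i, (e δ) i ^ 2) / Real.sqrt v) := by
        rw [hnorm, hsv]
    _ ≤ smoothedConf f σ (x + δ) y := hkb
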